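/- arXiv:2302.08151 — 3 statements merged into one kernel-verified Lean document; each statement's English description precedes it below -/
import Mathlib

section
/- For any p1, q1 ∈ (0,1) and any ω ∈ (0,∞), there exists a unique bivariate Bernoulli distribution (p_{00}, p_{01}, p_{10}, p_{11}), with all entries positive and summing to 1, having marginals p_{10}+p_{11} = p1 and p_{01}+p_{11} = q1 and odds ratio (p_{00}p_{11})/(p_{10}p_{01}) = ω. -/
/-- The triple (X-marginal of 1, Y-marginal of 1, odds ratio) parametrizes
bivariate Bernoulli distributions bijectively over (0,1)×(0,1)×(0,∞):
for each such triple there is exactly one distribution `(p00, p01, p10, p11)`. -/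
theorem bivariate_bernoulli_odds_ratio_parametrization
    (p1 q1 ω : ℝ) (hp1 : p1 ∈ Set.Ioo (0:ℝ) 1) (hq1 : q1 ∈ Set.Ioo (0:ℝ) 1)
    (hω : 0 < ω) :
    ∃! p : ℝ × ℝ × ℝ × ℝ,
      0 < p.1 ∧ 0 < p.2.1 ∧ 0 < p.2.2.1 ∧ 0 < p.2.2.2 ∧
      p.1 + p.2.1 + p.2.2.1 + p.2.2.2 = 1 ∧
      p.2.2.1 + p.2.2.2 = p1 ∧
      p.2.1 + p.2.2.2 = q1 ∧
      p.1 * p.2.2.2 / (p.2.2.1 * p.2.1) = ω := by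
  obtain ⟨hp0, hp1'⟩ := hp1
  obtain ⟨hq0, hq1'⟩ := hq1
  set L : ℝ := max 0 (p1 + q1 - 1) with hL
  set U : ℝ := min p1 q1 with hU
  set f : ℝ → ℝ := fun x => (1 - p1 - q1 + x) * x - ω * ((p1 - x) * (q1 - x)) with hf
  have hL0 : 0 ≤ L := le_max_left _ _
  have hL1 : p1 + q1 - 1 ≤ L := le_max_right _ _
  have hUp : U ≤ p1 := min_le_left _ _
  have hUq : U ≤ q1 := min_le_right _ _
  have hLU : L < U := by
    rw [hL, hU, lt_min_iff, max_lt_iff, max_lt_iff]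
    exact ⟨⟨hp0, by linarith⟩, ⟨hq0, by linarith⟩⟩
  -- strict monotonicity of f on [L, U]
  have hmono : ∀ s t : ℝ, L ≤ s → s < t → t ≤ U → f s < f t := by
    intro s t hs hst htU
    have h1 : 0 ≤ 1 - p1 - q1 + s := by linarith
    have h2 : 0 < t := by linarith
    have h3 : 0 < p1 - s := by linarith
    have h4 : 0 ≤ q1 - t := by linarith
    have key : f t - f s
        = (t - s) * ((1 - p1 - q1 + s) + t + ω * (p1 - s) + ω * (q1 - t)) := by
      simp only [hf]; ring
    have hpos : 0 < (t - s) * ((1 - p1 - q1 + s) + t + ω * (p1 - s) + ω * (q1 - t)) := by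
      have := mul_pos hω h3
      have := mul_nonneg hω.le h4
      apply mul_pos (by linarith)
      linarith
    linarith
  -- endpoint signs
  have hfL : f L < 0 := by
    rcases le_or_gt (p1 + q1 - 1) 0 with h | h
    · have : L = 0 := max_eq_left h
      rw [this]
      simp only [hf]
      have := mul_pos hω (mul_pos hp0 hq0)
      nlinarith
    · have hLe : L = p1 + q1 - 1 := max_eq_right h.le
      rw [hLe]
      simp only [hf]
      have : 0 < ω * ((1 - q1) * (1 - p1)) := mul_pos hω (mul_pos (by linarith) (by linarith))
      nlinarith
  have hfU : 0 < f U := by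
    rcases le_total p1 q1 with h | h
    · have : U = p1 := min_eq_left h
      rw [this]; simp only [hf]
      nlinarith
    · have : U = q1 := min_eq_right h
      rw [this]; simp only [hf]
      nlinarith
  -- continuity and IVT
  have hcont : ContinuousOn f (Set.Icc L U) := by
    apply Continuous.continuousOn
    simp only [hf]
    continuity
  have hIVT := intermediate_value_Icc hLU.le hcont
  have h0mem : (0:ℝ) ∈ Set.Icc (f L) (f U) := ⟨hfL.le, hfU.le⟩
  obtain ⟨t, htmem, hft⟩ := hIVT h0mem
  obtain ⟨htL, htU⟩ := htmem
  have htL' : L < t := lt_of_le_of_ne htL (by intro h; rw [← h] at hft; linarith)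
  have htU' : t < U := lt_of_le_of_ne htU (by intro h; rw [h] at hft; linarith)
  have ht0 : 0 < t := lt_of_le_of_lt hL0 htL'
  have htp : t < p1 := lt_of_lt_of_le htU' hUp
  have htq : t < q1 := lt_of_lt_of_le htU' hUq
  have ht1 : 0 < 1 - p1 - q1 + t := by linarith
  refine ⟨(1 - p1 - q1 + t, q1 - t, p1 - t, t), ⟨ht1, show (0:ℝ) < q1 - t by linarith,
    show (0:ℝ) < p1 - t by linarith, ht0,
    by show 1 - p1 - q1 + t + (q1 - t) + (p1 - t) + t = 1; ring,
    by show p1 - t + t = p1; ring,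
    by show q1 - t + t = q1; ring, ?_⟩, ?_⟩
  · have hden : (p1 - t) * (q1 - t) ≠ 0 := (mul_pos (by linarith) (by linarith)).ne'
    show (1 - p1 - q1 + t) * t / ((p1 - t) * (q1 - t)) = ω
    rw [div_eq_iff hden]
    simp only [hf] at hft
    linarith
  · rintro ⟨a, b, c, d⟩ ⟨ha, hb, hc, hd, hsum, hm1, hm2, hor⟩
    simp only at ha hb hc hd hsum hm1 hm2 hor ⊢
    have hcval : c = p1 - d := by linarith
    have hbval : b = q1 - d := by linarith
    have haval : a = 1 - p1 - q1 + d := by linarith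
    have hdL : L ≤ d := by
      rw [hL]
      apply max_le hd.le
      subst haval; linarith
    have hdU : d ≤ U := by
      rw [hU]
      apply le_min
      · subst hcval; linarith
      · subst hbval; linarith
    have hfd : f d = 0 := by
      have hden : c * b ≠ 0 := (mul_pos hc hb).ne'
      rw [div_eq_iff hden] at hor
      simp only [hf]
      subst hcval hbval haval
      linarith
    have hdt : d = t := by
      rcases lt_trichotomy d t with h | h | h
      · exfalso; have := hmono d t hdL h htU; rw [hfd, hft] at this; exact lt_irrefl 0 this
      · exact h
      · exfalso; have := hmono t d htL h hdU; rw [hfd, hft] at this; exact lt_irrefl 0 this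
    subst hdt hcval hbval haval
    rfl
end

section
/- Conversely, if two bivariate Bernoulli distributions with positive entries have equal odds ratios, then there exist positive reals a_0, a_1, b_0, b_1 such that p*_{xy} = p_{xy} · a_x · b_y for all x, y ∈ {0,1}. -/
/-- If two bivariate Bernoulli distributions with positive entries have equal
odds ratios, their densities differ by a product of marginal factors. -/
theorem equal_odds_ratio_implies_product_form
    (p q : Fin 2 → Fin 2 → ℝ)
    (hp : ∀ x y, 0 < p x y) (hq : ∀ x y, 0 < q x y)
    (hpsum : ∑ x, ∑ y, p x y = 1) (hqsum : ∑ x, ∑ y, q x y = 1)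
    (hodds : q 0 0 * q 1 1 / (q 1 0 * q 0 1) = p 0 0 * p 1 1 / (p 1 0 * p 0 1)) :
    ∃ a b : Fin 2 → ℝ, (∀ x, 0 < a x) ∧ (∀ y, 0 < b y) ∧
      ∀ x y, q x y = p x y * a x * b y := by
  refine ⟨![q 0 0 / p 0 0, q 1 0 / p 1 0], ![1, q 0 1 * p 0 0 / (p 0 1 * q 0 0)], ?_, ?_, ?_⟩
  · intro x
    fin_cases x <;> simp
    · exact div_pos (hq 0 0) (hp 0 0)
    · exact div_pos (hq 1 0) (hp 1 0)
  · intro y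
    fin_cases y <;> simp
    exact div_pos (mul_pos (hq 0 1) (hp 0 0)) (mul_pos (hp 0 1) (hq 0 0))
  · have h00 := (hp 0 0).ne'
    have h01 := (hp 0 1).ne'
    have h10 := (hp 1 0).ne'
    have h11 := (hp 1 1).ne'
    have g00 := (hq 0 0).ne'
    have g01 := (hq 0 1).ne'
    have g10 := (hq 1 0).ne'
    have key : q 1 1 * (p 1 0 * (p 0 1 * q 0 0)) = p 1 1 * q 1 0 * (q 0 1 * p 0 0) := by
      field_simp at hodds
      linear_combination hodds
    intro x y
    fin_cases x <;> fin_cases y <;> simp <;> field_simp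
    · linear_combination key
end

section
/- Consider a 3×3 probability matrix supported on the off-diagonal entries (p_{xy} > 0 if x ≠ y, p_{xx} = 0). There exist positive reals q_0, q_1, q_2, r_0, r_1, r_2 with p_{xy} = q_x r_y for all x ≠ y (quasi-independence) if and only if p_{01} p_{12} p_{20} = p_{02} p_{10} p_{21}. -/
open Finset

/-- For a 3×3 probability matrix supported off the diagonal, quasi-independence
(`p_{xy} = q_x r_y` on the support) holds iff `p₀₁p₁₂p₂₀ = p₀₂p₁₀p₂₁`. -/
theorem quasi_independence_off_diagonal_3x3
    (p : Fin 3 → Fin 3 → ℝ)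
    (hdiag : ∀ x, p x x = 0)
    (hpos : ∀ x y, x ≠ y → 0 < p x y)
    (hsum : ∑ x, ∑ y, p x y = 1) :
    (∃ q r : Fin 3 → ℝ, (∀ x, 0 < q x) ∧ (∀ y, 0 < r y) ∧
        ∀ x y, x ≠ y → p x y = q x * r y) ↔
      p 0 1 * p 1 2 * p 2 0 = p 0 2 * p 1 0 * p 2 1 := by
  have h01 := hpos 0 1 (by decide)
  have h02 := hpos 0 2 (by decide)
  have h10 := hpos 1 0 (by decide)
  have h12 := hpos 1 2 (by decide)
  have h20 := hpos 2 0 (by decide)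
  have h21 := hpos 2 1 (by decide)
  constructor
  · rintro ⟨q, r, hq, hr, h⟩
    rw [h 0 1 (by decide), h 1 2 (by decide), h 2 0 (by decide),
        h 0 2 (by decide), h 1 0 (by decide), h 2 1 (by decide)]
    ring
  · intro heq
    refine ⟨![1, p 1 2 / p 0 2, p 2 1 / p 0 1],
      ![p 1 0 * p 0 2 / p 1 2, p 0 1, p 0 2], ?_, ?_, ?_⟩
    · intro x
      fin_cases x <;> simp <;> positivity
    · intro y
      fin_cases y <;> simp <;> positivity
    · have n01 : p 0 1 ≠ 0 := ne_of_gt h01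
      have n02 : p 0 2 ≠ 0 := ne_of_gt h02
      have n12 : p 1 2 ≠ 0 := ne_of_gt h12
      intro x y hxy
      fin_cases x <;> fin_cases y <;>
        first
        | exact absurd rfl hxy
        | (simp; try field_simp; try ring; try linear_combination heq)
end
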